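/- arXiv:2604.01190 — 5 statements merged into one kernel-verified Lean document; each statement's English description precedes it below -/
import Mathlib

section
/- The function θ(λ) = -1 + Artanh(√(1-4λ))/√(1-4λ) is strictly decreasing on (0, 1/4). -/
/-!
Write `θ(λ) = -1 + g(√(1 - 4λ))` with `g x = artanh x / x`. Since `artanh' x = 1 / (1 - x²)` is
strictly increasing on `[0, 1)`, `artanh` is strictly convex there; as `artanh 0 = 0`, `g x` is the
slope of the chord from `0` to `x`, hence strictly increasing on `(0, 1)`. Composing with the
strictly decreasing map `λ ↦ √(1 - 4λ)` from `(0, 1/4)` into `(0, 1)` gives the claim.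
-/

open Real Filter Set

noncomputable def artanh (x : ℝ) : ℝ := (1/2) * Real.log ((1+x)/(1-x))

noncomputable def thetaF (l : ℝ) : ℝ := -1 + _root_.artanh (Real.sqrt (1-4*l)) / Real.sqrt (1-4*l)

@[simp]
lemma artanh_zero : _root_.artanh 0 = 0 := by
  simp [_root_.artanh]

lemma hasDerivAt_artanh {x : ℝ} (hx : x ∈ Ioo (-1 : ℝ) 1) :
    HasDerivAt _root_.artanh (1 / (1 - x ^ 2)) x := by
  obtain ⟨hx₁, hx₂⟩ := hx
  have hsub : (1 : ℝ) - x ≠ 0 := by linarith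
  have hadd : (1 : ℝ) + x ≠ 0 := by linarith
  have hsq : (1 : ℝ) - x ^ 2 ≠ 0 := by nlinarith
  have hquot : HasDerivAt (fun y : ℝ => (1 + y) / (1 - y)) (2 / (1 - x) ^ 2) x :=
    (((hasDerivAt_id x).const_add 1).div ((hasDerivAt_id x).const_sub 1) hsub).congr_deriv
      (by simp only [id]; ring)
  refine ((hquot.log (div_ne_zero hadd hsub)).const_mul (1 / 2 : ℝ)).congr_deriv ?_
  field_simp
  ring

lemma strictConvexOn_artanh : StrictConvexOn ℝ (Ico 0 1) _root_.artanh := by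
  have hderiv : ∀ x ∈ Ioo (0 : ℝ) 1, deriv _root_.artanh x = 1 / (1 - x ^ 2) := fun x hx =>
    (hasDerivAt_artanh ⟨by linarith [hx.1], hx.2⟩).deriv
  refine StrictMonoOn.strictConvexOn_of_deriv (convex_Ico 0 1) ?_ ?_
  · exact fun x hx => (hasDerivAt_artanh ⟨by linarith [hx.1], hx.2⟩).continuousAt.continuousWithinAt
  · rw [interior_Ico]
    intro x hx y hy hxy
    rw [hderiv x hx, hderiv y hy]
    have hsq : x ^ 2 < y ^ 2 := pow_lt_pow_left₀ hxy hx.1.le two_ne_zero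
    gcongr
    nlinarith [hy.2, hy.1]

lemma strictMonoOn_artanh_div_self :
    StrictMonoOn (fun x => _root_.artanh x / x) (Ioo 0 1) := by
  intro x hx y hy hxy
  simpa using strictConvexOn_artanh.secant_strict_mono (a := 0) ⟨le_rfl, one_pos⟩
    (Ioo_subset_Ico_self hx) (Ioo_subset_Ico_self hy) hx.1.ne' hy.1.ne' hxy

lemma strictAntiOn_sqrt_one_sub_four_mul :
    StrictAntiOn (fun l : ℝ => √(1 - 4 * l)) (Ioo 0 (1 / 4)) := fun _ _ b hb hab =>
  Real.sqrt_lt_sqrt (by linarith [hb.2]) (by linarith)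

lemma mapsTo_sqrt_one_sub_four_mul :
    MapsTo (fun l : ℝ => √(1 - 4 * l)) (Ioo 0 (1 / 4)) (Ioo 0 1) := fun l hl =>
  ⟨Real.sqrt_pos.mpr (by linarith [hl.2]), (Real.sqrt_lt' one_pos).mpr (by linarith [hl.1])⟩

theorem stmt2 : StrictAntiOn thetaF (Set.Ioo (0:ℝ) (1/4)) := by
  intro a ha b hb hab
  have := strictMonoOn_artanh_div_self.comp_strictAntiOn strictAntiOn_sqrt_one_sub_four_mul
    mapsTo_sqrt_one_sub_four_mul ha hb hab
  simp only [thetaF, Function.comp_apply] at this ⊢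
  linarith
end

section
/- With λ(θ) the inverse of θ(λ) = -1 + Artanh(√(1-4λ))/√(1-4λ), the quantity 1 - 4(θ+1)λ(θ) is strictly positive for all θ > 0, so j(θ) = -(1/2)·log(1-4(θ+1)λ(θ)) + log(2)/2 is well-defined. -/
open Real Filter Set

/- With `x = (1 + s) / (1 - s)` we have `2 artanh s = log x` and `sinh (log x) = 2 s / (1 - s²)`,
so this is `y < sinh y` for `y = log x > 0`. -/
lemma artanh_lt_div_one_sub_sq {s : ℝ} (hs : s ∈ Ioo (0 : ℝ) 1) :
    _root_.artanh s < s / (1 - s ^ 2) := by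
  obtain ⟨hs0, hs1⟩ := hs
  have hden : 0 < 1 - s := by linarith
  have hx : 1 < (1 + s) / (1 - s) := by rw [one_lt_div hden]; linarith
  have hlog := self_lt_sinh_iff.2 (log_pos hx)
  rw [sinh_log (by linarith)] at hlog
  have hsinh : ((1 + s) / (1 - s) - ((1 + s) / (1 - s))⁻¹) / 2 = 2 * (s / (1 - s ^ 2)) := by
    have : 1 + s ≠ 0 := by linarith
    have : 1 - s ^ 2 ≠ 0 := by nlinarith
    field_simp
    ring
  unfold _root_.artanh
  linarith

lemma four_mul_thetaF_add_one_mul_lt_one {l : ℝ} (hl : l ∈ Ioo (0 : ℝ) (1 / 4)) :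
    4 * (thetaF l + 1) * l < 1 := by
  obtain ⟨hl0, hl4⟩ := hl
  set s := √(1 - 4 * l)
  have hs0 : 0 < s := sqrt_pos.2 (by linarith)
  have hsq : 1 - s ^ 2 = 4 * l := by rw [sq_sqrt (by linarith)]; ring
  have hs1 : s < 1 := by nlinarith
  have hlt := artanh_lt_div_one_sub_sq ⟨hs0, hs1⟩
  rw [hsq] at hlt
  have hdiv : _root_.artanh s / s < 1 / (4 * l) := by
    rwa [div_lt_iff₀ hs0, div_mul_eq_mul_div, one_mul]
  have htheta : thetaF l + 1 = _root_.artanh s / s := by unfold thetaF; ring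
  rw [htheta]
  calc 4 * (_root_.artanh s / s) * l < 4 * (1 / (4 * l)) * l := by gcongr
    _ = 1 := by field_simp

theorem stmt10 (lam : ℝ → ℝ)
    (hmem : ∀ θ > (0:ℝ), lam θ ∈ Set.Ioo (0:ℝ) (1/4))
    (hinv : ∀ θ > (0:ℝ), thetaF (lam θ) = θ) :
    ∀ θ > (0:ℝ), 0 < 1 - 4*(θ+1)*lam θ := by
  intro θ hθ
  have hlt := four_mul_thetaF_add_one_mul_lt_one (hmem θ hθ)
  rw [hinv θ hθ] at hlt
  linarith
end

section
/- Define f₀(θ) = f(θ) + θ log θ, where f(θ) = -log λ(θ) - 2θ - θ log(1-4λ(θ)) and λ(θ) is the inverse of θ(λ) = -1 + Artanh(√(1-4λ))/√(1-4λ). Then f₀ extends continuously to θ = 0 with f₀(0) = log 4, and f₀'(0) = 1 - log 3. -/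
open Real Filter Set

lemma artanh_eq {x : ℝ} (h0 : -1 < x) (h1 : x < 1) :
    _root_.artanh x = (1/2) * (Real.log (1+x) - Real.log (1-x)) := by
  rw [_root_.artanh, Real.log_div (by linarith) (by linarith)]

lemma hasDerivAt_aux {x : ℝ} (h0 : -1 < x) (h1 : x < 1) :
    HasDerivAt (fun y : ℝ => (1/2) * (Real.log (1+y) - Real.log (1-y)))
      (1/(1-x^2)) x := by
  have hx1 : (1:ℝ) + x ≠ 0 := by linarith
  have hx2 : (1:ℝ) - x ≠ 0 := by linarith
  have hx3 : (1:ℝ) - x^2 ≠ 0 := by nlinarith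
  have hA : HasDerivAt (fun y : ℝ => Real.log (1+y)) (1/(1+x)) x := by
    have := ((hasDerivAt_id x).const_add 1).log hx1
    simpa using this
  have hB : HasDerivAt (fun y : ℝ => Real.log (1-y)) ((-1)/(1-x)) x := by
    have := ((hasDerivAt_id x).const_sub 1).log hx2
    simpa using this
  have := ((hA.sub hB).const_mul (1/2 : ℝ))
  refine this.congr_deriv ?_
  field_simp
  ring

lemma hasDerivAt_cubic (x : ℝ) : HasDerivAt (fun y : ℝ => y + y^3/3) (1 + x^2) x := by
  have := (hasDerivAt_id' x).add ((hasDerivAt_pow 3 x).div_const 3)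
  refine this.congr_deriv ?_
  norm_num

lemma hasDerivAt_g {x : ℝ} (h0 : -1 < x) (h1 : x < 1) :
    HasDerivAt (fun y : ℝ => (1/2) * (Real.log (1+y) - Real.log (1-y)) - (y + y^3/3))
      (1/(1-x^2) - (1 + x^2)) x :=
  (hasDerivAt_aux h0 h1).sub (hasDerivAt_cubic x)

lemma artanh_lower {s : ℝ} (h0 : 0 ≤ s) (h1 : s < 1) :
    s + s^3/3 ≤ _root_.artanh s := by
  set g : ℝ → ℝ := fun x => (1/2) * (Real.log (1+x) - Real.log (1-x)) - (x + x^3/3) with hg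
  have key : MonotoneOn g (Set.Ico (0:ℝ) 1) := by
    apply monotoneOn_of_deriv_nonneg (convex_Ico 0 1)
    · intro x hx
      exact (hasDerivAt_g (by linarith [hx.1]) hx.2).continuousAt.continuousWithinAt
    · rw [interior_Ico]
      intro x hx
      exact (hasDerivAt_g (by linarith [hx.1]) hx.2).differentiableAt.differentiableWithinAt
    · rw [interior_Ico]
      intro x hx
      rw [(hasDerivAt_g (by linarith [hx.1]) hx.2).deriv]
      have hx3 : (0:ℝ) < 1 - x^2 := by nlinarith [hx.1, hx.2]
      have : 1/(1-x^2) - (1 + x^2) = x^4/(1-x^2) := by field_simp; ring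
      rw [this]; positivity
  have h00 : g 0 = 0 := by simp [hg]
  have := key (show (0:ℝ) ∈ Set.Ico (0:ℝ) 1 by constructor <;> norm_num)
    (show s ∈ Set.Ico (0:ℝ) 1 from ⟨h0, h1⟩) h0
  rw [h00, hg] at this
  rw [artanh_eq (by linarith) h1]
  simpa using this

lemma hasDerivAt_k {x : ℝ} (h0 : -1 < x) (h1 : x < 1) :
    HasDerivAt (fun y : ℝ => (y + y^3/(3*(1-y^2))) - (1/2) * (Real.log (1+y) - Real.log (1-y)))
      (2*x^4/(3*(1-x^2)^2)) x := by
  have hx3 : (0:ℝ) < 1 - x^2 := by nlinarith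
  have hden : (3:ℝ)*(1-x^2) ≠ 0 := by positivity
  have hnum : HasDerivAt (fun y : ℝ => y^3) (3*x^2) x := by
    simpa using hasDerivAt_pow 3 x
  have hden' : HasDerivAt (fun y : ℝ => 3*(1-y^2)) (3*(-(2*x))) x := by
    exact (((hasDerivAt_pow 2 x).const_sub 1).const_mul 3).congr_deriv (by ring_nf)
  have hdiv : HasDerivAt (fun y : ℝ => y^3/(3*(1-y^2)))
      ((3*x^2*(3*(1-x^2)) - x^3*(3*(-(2*x))))/(3*(1-x^2))^2) x := hnum.div hden' hden
  have := ((hasDerivAt_id' x).add hdiv).sub (hasDerivAt_aux h0 h1)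
  refine this.congr_deriv ?_
  field_simp
  ring

lemma artanh_upper {s : ℝ} (h0 : 0 ≤ s) (h1 : s < 1) :
    _root_.artanh s ≤ s + s^3/(3*(1-s^2)) := by
  set k : ℝ → ℝ := fun x => (x + x^3/(3*(1-x^2))) - (1/2) * (Real.log (1+x) - Real.log (1-x))
    with hk
  have key : MonotoneOn k (Set.Ico (0:ℝ) 1) := by
    apply monotoneOn_of_deriv_nonneg (convex_Ico 0 1)
    · intro x hx
      exact (hasDerivAt_k (by linarith [hx.1]) hx.2).continuousAt.continuousWithinAt
    · rw [interior_Ico]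
      intro x hx
      exact (hasDerivAt_k (by linarith [hx.1]) hx.2).differentiableAt.differentiableWithinAt
    · rw [interior_Ico]
      intro x hx
      rw [(hasDerivAt_k (by linarith [hx.1]) hx.2).deriv]
      have hx3 : (0:ℝ) < 1 - x^2 := by nlinarith [hx.1, hx.2]
      positivity
  have h00 : k 0 = 0 := by simp [hk]
  have := key (show (0:ℝ) ∈ Set.Ico (0:ℝ) 1 by constructor <;> norm_num)
    (show s ∈ Set.Ico (0:ℝ) 1 from ⟨h0, h1⟩) h0
  rw [h00, hk] at this
  rw [artanh_eq (by linarith) h1]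
  simp only at this
  linarith

theorem stmt13 (lam : ℝ → ℝ)
    (hmem : ∀ θ > (0:ℝ), lam θ ∈ Set.Ioo (0:ℝ) (1/4))
    (hinv : ∀ θ > (0:ℝ), thetaF (lam θ) = θ)
    (f f₀ : ℝ → ℝ)
    (hf : ∀ θ, f θ = -Real.log (lam θ) - 2*θ - θ * Real.log (1 - 4 * lam θ))
    (hf0 : ∀ θ > (0:ℝ), f₀ θ = f θ + θ * Real.log θ) :
    Tendsto f₀ (nhdsWithin 0 (Set.Ioi (0:ℝ))) (nhds (Real.log 4)) ∧
    Tendsto (fun θ => (f₀ θ - Real.log 4) / θ) (nhdsWithin 0 (Set.Ioi (0:ℝ)))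
      (nhds (1 - Real.log 3)) := by
  -- basic facts for each θ > 0
  have key : ∀ θ ∈ Set.Ioi (0:ℝ), (1 - 4 * lam θ)/3 ≤ θ ∧ 12 * lam θ * θ ≤ 1 - 4 * lam θ := by
    intro θ hθ
    rw [Set.mem_Ioi] at hθ
    obtain ⟨hl0, hl1⟩ := hmem θ hθ
    have hr0 : (0:ℝ) < 1 - 4 * lam θ := by linarith
    have hr1 : 1 - 4 * lam θ < 1 := by linarith
    set s := Real.sqrt (1 - 4 * lam θ) with hs
    have hs0 : 0 < s := Real.sqrt_pos.mpr hr0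
    have hs2 : s^2 = 1 - 4 * lam θ := Real.sq_sqrt hr0.le
    have hs1 : s < 1 := by nlinarith
    have hA : _root_.artanh s = (1+θ)*s := by
      have h := hinv θ hθ
      rw [thetaF] at h
      field_simp at h ⊢
      linarith
    have hlow := artanh_lower hs0.le hs1
    have hup := artanh_upper hs0.le hs1
    rw [hA] at hlow hup
    constructor
    · nlinarith
    · have h4l : 1 - s^2 = 4 * lam θ := by rw [hs2]; ring
      rw [h4l] at hup
      have h12 : (0:ℝ) < 12 * lam θ := by linarith
      have h1 : θ * s ≤ s^3/(12 * lam θ) := by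
        have : (3:ℝ) * (4 * lam θ) = 12 * lam θ := by ring
        rw [this] at hup
        nlinarith
      rw [le_div_iff₀ h12] at h1
      nlinarith
  -- r := 1 - 4 lam θ tends to 0
  have hr_tendsto : Tendsto (fun θ => 1 - 4 * lam θ) (nhdsWithin 0 (Set.Ioi (0:ℝ))) (nhds 0) := by
    apply tendsto_of_tendsto_of_tendsto_of_le_of_le' tendsto_const_nhds
      (show Tendsto (fun θ : ℝ => 3*θ) (nhdsWithin 0 (Set.Ioi (0:ℝ))) (nhds 0) by
        have : Tendsto (fun θ : ℝ => 3*θ) (nhds 0) (nhds 0) := by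
          simpa using (continuous_mul_left (3:ℝ)).tendsto (0:ℝ)
        exact this.mono_left nhdsWithin_le_nhds)
    · filter_upwards [eventually_mem_nhdsWithin] with θ hθ
      rw [Set.mem_Ioi] at hθ
      have := (hmem θ hθ).2
      linarith
    · filter_upwards [eventually_mem_nhdsWithin] with θ hθ
      have := (key θ hθ).1
      linarith
  have hlam : Tendsto lam (nhdsWithin 0 (Set.Ioi (0:ℝ))) (nhds (1/4)) := by
    have h1 : Tendsto (fun θ => (1 - (1 - 4 * lam θ))/4) (nhdsWithin 0 (Set.Ioi (0:ℝ)))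
        (nhds ((1-0)/4)) := (tendsto_const_nhds.sub hr_tendsto).div_const 4
    simp only [sub_zero] at h1
    refine h1.congr (fun θ => by ring)
  -- θ / r tends to 1/3
  have hq : Tendsto (fun θ => θ / (1 - 4 * lam θ)) (nhdsWithin 0 (Set.Ioi (0:ℝ)))
      (nhds (1/3)) := by
    have hup : Tendsto (fun θ => 1/(12 * lam θ)) (nhdsWithin 0 (Set.Ioi (0:ℝ)))
        (nhds (1/3)) := by
      have h1 : Tendsto (fun θ => 12 * lam θ) (nhdsWithin 0 (Set.Ioi (0:ℝ)))
          (nhds 3) := by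
        have := hlam.const_mul (12:ℝ)
        norm_num at this
        exact this
      have := h1.inv₀ (by norm_num)
      simpa [one_div] using this
    apply tendsto_of_tendsto_of_tendsto_of_le_of_le' tendsto_const_nhds hup
    · filter_upwards [eventually_mem_nhdsWithin] with θ hθ
      rw [Set.mem_Ioi] at hθ
      obtain ⟨hl0, hl1⟩ := hmem θ hθ
      have hr0 : (0:ℝ) < 1 - 4 * lam θ := by linarith
      have := (key θ hθ).1
      rw [le_div_iff₀ hr0]
      linarith
    · filter_upwards [eventually_mem_nhdsWithin] with θ hθ
      rw [Set.mem_Ioi] at hθ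
      obtain ⟨hl0, hl1⟩ := hmem θ hθ
      have hr0 : (0:ℝ) < 1 - 4 * lam θ := by linarith
      have h12 : (0:ℝ) < 12 * lam θ := by linarith
      have := (key θ hθ).2
      rw [div_le_div_iff₀ hr0 h12]
      nlinarith
  have hlogq : Tendsto (fun θ => Real.log (θ / (1 - 4 * lam θ)))
      (nhdsWithin 0 (Set.Ioi (0:ℝ))) (nhds (-Real.log 3)) := by
    have := (Real.continuousAt_log (by norm_num : (1/3:ℝ) ≠ 0)).tendsto.comp hq
    have h3 : Real.log (1/3) = -Real.log 3 := by
      rw [one_div, Real.log_inv]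
    rw [← h3]
    exact this
  have hid : Tendsto (fun θ : ℝ => θ) (nhdsWithin 0 (Set.Ioi (0:ℝ))) (nhds 0) :=
    tendsto_id.mono_left nhdsWithin_le_nhds
  have hloglam : Tendsto (fun θ => -Real.log (lam θ)) (nhdsWithin 0 (Set.Ioi (0:ℝ)))
      (nhds (Real.log 4)) := by
    have := ((Real.continuousAt_log (by norm_num : (1/4:ℝ) ≠ 0)).tendsto.comp hlam).neg
    have h4 : -Real.log (1/4) = Real.log 4 := by
      rw [one_div, Real.log_inv, neg_neg]
    rw [← h4]
    exact this
  constructor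
  · -- first limit
    have heq : ∀ θ ∈ Set.Ioi (0:ℝ),
        f₀ θ = -Real.log (lam θ) + (-(2*θ) + θ * Real.log (θ / (1 - 4 * lam θ))) := by
      intro θ hθ
      rw [Set.mem_Ioi] at hθ
      obtain ⟨hl0, hl1⟩ := hmem θ hθ
      have hr0 : (0:ℝ) < 1 - 4 * lam θ := by linarith
      rw [hf0 θ hθ, hf θ, Real.log_div (ne_of_gt hθ) (ne_of_gt hr0)]
      ring
    have hlim : Tendsto (fun θ => -Real.log (lam θ) +
        (-(2*θ) + θ * Real.log (θ / (1 - 4 * lam θ))))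
        (nhdsWithin 0 (Set.Ioi (0:ℝ))) (nhds (Real.log 4 + (-(2*0) + 0 * (-Real.log 3)))) := by
      exact hloglam.add (((hid.const_mul 2).neg).add (hid.mul hlogq))
    norm_num at hlim
    exact hlim.congr' (by filter_upwards [eventually_mem_nhdsWithin] with θ hθ
      using (heq θ hθ).symm)
  · -- second limit
    have hT : Tendsto (fun θ => -Real.log (4 * lam θ) / θ) (nhdsWithin 0 (Set.Ioi (0:ℝ)))
        (nhds 3) := by
      have hlow : Tendsto (fun θ => 12 * lam θ) (nhdsWithin 0 (Set.Ioi (0:ℝ)))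
          (nhds 3) := by
        have := hlam.const_mul (12:ℝ)
        norm_num at this
        exact this
      have hup : Tendsto (fun θ => 3 / (4 * lam θ)) (nhdsWithin 0 (Set.Ioi (0:ℝ)))
          (nhds 3) := by
        have h1 : Tendsto (fun θ => 4 * lam θ) (nhdsWithin 0 (Set.Ioi (0:ℝ)))
            (nhds 1) := by
          have := hlam.const_mul (4:ℝ)
          norm_num at this
          exact this
        have := (tendsto_const_nhds (x := (3:ℝ))).div h1 (by norm_num)
        simpa [Pi.div_def] using this
      apply tendsto_of_tendsto_of_tendsto_of_le_of_le' hlow hup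
      · filter_upwards [eventually_mem_nhdsWithin] with θ hθ
        rw [Set.mem_Ioi] at hθ
        obtain ⟨hl0, hl1⟩ := hmem θ hθ
        have hr0 : (0:ℝ) < 1 - 4 * lam θ := by linarith
        -- -log(4l) ≥ 1 - 4l = r  and  θ ≤ r/(12 l)
        have hlog1 : Real.log (4 * lam θ) ≤ (4 * lam θ) - 1 :=
          Real.log_le_sub_one_of_pos (by linarith)
        have hk := (key θ hθ).2
        rw [le_div_iff₀ hθ]
        nlinarith
      · filter_upwards [eventually_mem_nhdsWithin] with θ hθ
        rw [Set.mem_Ioi] at hθ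
        obtain ⟨hl0, hl1⟩ := hmem θ hθ
        have hr0 : (0:ℝ) < 1 - 4 * lam θ := by linarith
        -- -log(4l) ≤ r/(4l)  and  θ ≥ r/3
        have hlog2 : Real.log ((4 * lam θ)⁻¹) ≤ (4 * lam θ)⁻¹ - 1 :=
          Real.log_le_sub_one_of_pos (by positivity)
        rw [Real.log_inv] at hlog2
        have hinv4 : (4 * lam θ)⁻¹ - 1 = (1 - 4 * lam θ)/(4 * lam θ) := by
          field_simp
        rw [hinv4] at hlog2
        have hk := (key θ hθ).1
        rw [div_le_div_iff₀ hθ (by positivity : (0:ℝ) < 4 * lam θ)]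
        -- -log(4l) * (4l) ≤ r ≤ 3θ, goal : -log(4l) * (4l) ≤ 3*θ*... careful
        have h2 : -Real.log (4 * lam θ) * (4 * lam θ) ≤ 1 - 4 * lam θ := by
          have h4l : (0:ℝ) < 4 * lam θ := by positivity
          calc -Real.log (4*lam θ) * (4*lam θ)
              ≤ ((1 - 4*lam θ)/(4*lam θ)) * (4*lam θ) := by
                apply mul_le_mul_of_nonneg_right _ h4l.le
                linarith
            _ = 1 - 4*lam θ := by field_simp
        nlinarith
    have heq2 : ∀ θ ∈ Set.Ioi (0:ℝ),
        (f₀ θ - Real.log 4)/θ = -Real.log (4 * lam θ) / θ +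
          (-2 + Real.log (θ / (1 - 4 * lam θ))) := by
      intro θ hθ
      rw [Set.mem_Ioi] at hθ
      obtain ⟨hl0, hl1⟩ := hmem θ hθ
      have hr0 : (0:ℝ) < 1 - 4 * lam θ := by linarith
      rw [hf0 θ hθ, hf θ, Real.log_div (ne_of_gt hθ) (ne_of_gt hr0),
        Real.log_mul (by norm_num) (ne_of_gt hl0)]
      field_simp
      ring
    have hlim : Tendsto (fun θ => -Real.log (4 * lam θ) / θ +
        (-2 + Real.log (θ / (1 - 4 * lam θ)))) (nhdsWithin 0 (Set.Ioi (0:ℝ)))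
        (nhds (3 + (-2 + -Real.log 3))) := hT.add (tendsto_const_nhds.add hlogq)
    have : (3 : ℝ) + (-2 + -Real.log 3) = 1 - Real.log 3 := by ring
    rw [this] at hlim
    exact hlim.congr' (by filter_upwards [eventually_mem_nhdsWithin] with θ hθ
      using (heq2 θ hθ).symm)
end

section
/- Define j₀(θ) = j(θ) + (1/2)log θ, where j(θ) = -(1/2)log(1-4(θ+1)λ(θ)) + (1/2)log 2. Then j₀ extends continuously to θ = 0 with j₀(0) = 0. -/
open Real Filter Set

open Topology

/-!
Writing `s = √(1 - 4λ)`, the relation `θ(λ) = θ` reads `artanh s = (1 + θ) s`. The Taylor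
series `artanh s - s = ∑ s^(2k+3)/(2k+3)` traps `θ` between `s²/3` and `s²/(3(1 - s²))`, so
`1 - 4(θ+1)λ = 2θ + O(θ²)`. Hence `j θ + ½ log θ = -½ log ((1 - 4(θ+1)λ)/(2θ)) → 0`.
-/

lemma hasSum_artanh_sub_self {s : ℝ} (hs : |s| < 1) :
    HasSum (fun k : ℕ => s ^ (2 * k + 3) / (2 * k + 3)) (_root_.artanh s - s) := by
  have hseries : HasSum (fun k : ℕ => s ^ (2 * k + 1) / (2 * k + 1)) (_root_.artanh s) := by
    have hpos : 0 < 1 - s := by linarith [le_abs_self s]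
    have hpos' : 0 < 1 + s := by linarith [neg_abs_le s]
    rw [_root_.artanh, log_div hpos'.ne' hpos.ne']
    have hterm : (fun k : ℕ => s ^ (2 * k + 1) / (2 * k + 1))
        = fun k : ℕ => 1 / 2 * (2 * (1 / (2 * k + 1)) * s ^ (2 * k + 1)) := by
      ext k
      ring
    exact hterm ▸ (hasSum_log_sub_log_of_abs_lt_one hs).mul_left (1 / 2)
  have hshift := (hasSum_nat_add_iff' 1).mpr hseries
  have hterm : (fun k : ℕ => s ^ (2 * (k + 1) + 1) / (2 * ((k : ℝ) + 1) + 1))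
      = fun k : ℕ => s ^ (2 * k + 3) / (2 * k + 3) := by
    ext k
    ring
  simpa [hterm] using hshift

lemma artanh_sub_self_mem_Icc {s : ℝ} (hs0 : 0 ≤ s) (hs1 : s < 1) :
    _root_.artanh s - s ∈ Icc (s ^ 3 / 3) (s ^ 3 / (3 * (1 - s ^ 2))) := by
  have htail := hasSum_artanh_sub_self (abs_lt.mpr ⟨by linarith, hs1⟩)
  refine ⟨by simpa using le_hasSum htail 0 fun k _ => by positivity, ?_⟩
  have hs2 : s ^ 2 < 1 := by nlinarith
  have hgeom : HasSum (fun k : ℕ => s ^ 3 / 3 * (s ^ 2) ^ k) (s ^ 3 / 3 * (1 - s ^ 2)⁻¹) :=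
    (hasSum_geometric_of_lt_one (by positivity) hs2).mul_left _
  have hbound : s ^ 3 / (3 * (1 - s ^ 2)) = s ^ 3 / 3 * (1 - s ^ 2)⁻¹ := by
    rw [div_mul_eq_div_div, div_eq_mul_inv]
  refine hbound ▸ hasSum_le (fun k => ?_) htail hgeom
  calc s ^ (2 * k + 3) / (2 * k + 3) ≤ s ^ (2 * k + 3) / 3 :=
        div_le_div_of_nonneg_left (by positivity) (by norm_num) (by linarith [k.cast_nonneg (α := ℝ)])
    _ = s ^ 3 / 3 * (s ^ 2) ^ k := by ring

lemma thetaF_mem_Icc {l : ℝ} (hl : l ∈ Ioo 0 (1 / 4)) :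
    thetaF l ∈ Icc ((1 - 4 * l) / 3) ((1 - 4 * l) / (12 * l)) := by
  obtain ⟨hl0, hl1⟩ := hl
  set s := √(1 - 4 * l) with hs
  have hs_sq : s ^ 2 = 1 - 4 * l := sq_sqrt (by linarith)
  have hs0 : 0 < s := sqrt_pos.mpr (by linarith)
  have hs1 : s < 1 := by nlinarith
  have htheta : thetaF l = (_root_.artanh s - s) / s := by
    rw [thetaF, ← hs]
    field_simp
    ring
  obtain ⟨hlow, hup⟩ := artanh_sub_self_mem_Icc hs0.le hs1
  rw [htheta, ← hs_sq, show 12 * l = 3 * (1 - s ^ 2) by linarith]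
  constructor
  · rw [le_div_iff₀ hs0]
    linarith
  · rw [div_le_iff₀ hs0]
    exact hup.trans_eq (by ring)

lemma one_sub_four_mul_bounds {l θ : ℝ} (hl : l ∈ Ioo 0 (1 / 4)) (hθ : thetaF l = θ) :
    0 < 1 - 4 * (θ + 1) * l ∧ 2 * θ * (1 - 3 * θ) ≤ 1 - 4 * (θ + 1) * l ∧
      1 - 4 * (θ + 1) * l ≤ θ * (2 + 3 * θ) := by
  obtain ⟨hlow, hup⟩ := hθ ▸ thetaF_mem_Icc hl
  rw [div_le_iff₀ (by norm_num)] at hlow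
  rw [le_div_iff₀ (by linarith [hl.1])] at hup
  have hθ0 : 0 < θ := by linarith [hl.2]
  exact ⟨by nlinarith [hl.1], by nlinarith [hl.2], by nlinarith [hl.2]⟩

lemma tendsto_one_sub_four_mul_div (lam : ℝ → ℝ)
    (hmem : ∀ θ > (0 : ℝ), lam θ ∈ Ioo (0 : ℝ) (1 / 4))
    (hinv : ∀ θ > (0 : ℝ), thetaF (lam θ) = θ) :
    Tendsto (fun θ => (1 - 4 * (θ + 1) * lam θ) / (2 * θ)) (𝓝[>] 0) (𝓝 1) := by
  have hlinear (c : ℝ) : Tendsto (fun θ : ℝ => 1 + c * θ) (𝓝[>] 0) (𝓝 1) :=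
    ((continuous_const.add (continuous_const.mul continuous_id)).tendsto' 0 1 (by simp)).mono_left
      nhdsWithin_le_nhds
  refine tendsto_of_tendsto_of_tendsto_of_le_of_le' (hlinear (-3)) (hlinear (3 / 2)) ?_ ?_
  · filter_upwards [self_mem_nhdsWithin] with θ (hθ : 0 < θ)
    rw [le_div_iff₀ (by positivity)]
    linarith [(one_sub_four_mul_bounds (hmem θ hθ) (hinv θ hθ)).2.1]
  · filter_upwards [self_mem_nhdsWithin] with θ (hθ : 0 < θ)
    rw [div_le_iff₀ (by positivity)]
    linarith [(one_sub_four_mul_bounds (hmem θ hθ) (hinv θ hθ)).2.2]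

theorem stmt14 (lam : ℝ → ℝ)
    (hmem : ∀ θ > (0:ℝ), lam θ ∈ Set.Ioo (0:ℝ) (1/4))
    (hinv : ∀ θ > (0:ℝ), thetaF (lam θ) = θ)
    (j : ℝ → ℝ)
    (hj : ∀ θ, j θ = -(1/2) * Real.log (1 - 4*(θ+1)*lam θ) + (1/2) * Real.log 2) :
    Tendsto (fun θ => j θ + (1/2) * Real.log θ) (nhdsWithin 0 (Set.Ioi (0:ℝ)))
      (nhds 0) := by
  have hlog := ((continuousAt_log one_ne_zero).tendsto.comp
    (tendsto_one_sub_four_mul_div lam hmem hinv)).const_mul (-1 / 2)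
  rw [log_one, mul_zero] at hlog
  refine hlog.congr' ?_
  filter_upwards [self_mem_nhdsWithin] with θ (hθ : 0 < θ)
  have hD := (one_sub_four_mul_bounds (hmem θ hθ) (hinv θ hθ)).1
  rw [Function.comp_apply, hj θ, log_div hD.ne' (by positivity), log_mul two_ne_zero hθ.ne']
  ring
end

section
/- Let λ(θ) be the inverse of θ(λ) = -1 + Artanh(√(1-4λ))/√(1-4λ). Then for every a < 2 there exists C > 0 such that λ(θ) ≤ C·exp(-a·θ) for all θ ≥ 1. -/
open Real Filter Set

/-!
Write `s = √(1 - 4λ)`, so that `1 - s² = 4λ` and `θ + 1 = artanh s / s`. Since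
`artanh s = log (1 + s) - log (4λ) / 2 ≤ s - log (4λ) / 2`, one gets `4λ ≤ exp (-2sθ)`, which is
the claim with `C = 1/4` as long as `a ≤ 2s`. When `2s < a`, `s` stays away from `1`, and
`artanh s ≤ s / (1 - s)` bounds `θ` by `a / (2 - a)`; there `λ < 1/4` suffices.
-/

lemma artanh_eq_log_sub {x : ℝ} (hx₀ : -1 < x) (hx₁ : x < 1) :
    _root_.artanh x = log (1 + x) - log (1 - x ^ 2) / 2 := by
  have hfrac : (1 + x) / (1 - x) = (1 + x) ^ 2 / (1 - x ^ 2) := by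
    field_simp [show 1 - x ≠ 0 by linarith, show 1 - x ^ 2 ≠ 0 by nlinarith]
    ring
  rw [_root_.artanh, hfrac, log_div (pow_pos (by linarith) 2).ne' (by nlinarith), log_pow]
  push_cast
  ring

lemma artanh_le_div_one_sub {x : ℝ} (hx₀ : 0 ≤ x) (hx₁ : x < 1) :
    _root_.artanh x ≤ x / (1 - x) := by
  have hpos : 0 < 1 - x := by linarith
  have hplus : log (1 + x) ≤ x / (1 - x) :=
    (log_le_sub_one_of_pos (by linarith)).trans (by rw [le_div_iff₀ hpos]; nlinarith)
  have hminus : -log (1 - x) ≤ x / (1 - x) := by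
    have h := log_le_sub_one_of_pos (inv_pos.mpr hpos)
    rw [log_inv] at h
    calc -log (1 - x) ≤ (1 - x)⁻¹ - 1 := h
      _ = x / (1 - x) := by field_simp; ring
  rw [_root_.artanh, log_div (by linarith) hpos.ne']
  linarith

section thetaF

variable {l : ℝ}

lemma sqrt_one_sub_four_mul_mem (hl₀ : 0 < l) (hl₁ : l < 1 / 4) :
    √(1 - 4 * l) ∈ Ioo 0 1 :=
  ⟨sqrt_pos.mpr (by linarith), (sqrt_lt' one_pos).mpr (by linarith)⟩

lemma sqrt_mul_thetaF_add_one (hl₀ : 0 < l) (hl₁ : l < 1 / 4) :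
    √(1 - 4 * l) * (thetaF l + 1) = _root_.artanh √(1 - 4 * l) := by
  have hs := (sqrt_one_sub_four_mul_mem hl₀ hl₁).1
  rw [thetaF]
  field_simp
  ring

lemma four_mul_le_exp_thetaF (hl₀ : 0 < l) (hl₁ : l < 1 / 4) :
    4 * l ≤ exp (-(2 * √(1 - 4 * l)) * thetaF l) := by
  obtain ⟨hs₀, hs₁⟩ := sqrt_one_sub_four_mul_mem hl₀ hl₁
  have hsq : 1 - √(1 - 4 * l) ^ 2 = 4 * l := by
    rw [sq_sqrt (by linarith)]; ring
  have hart := sqrt_mul_thetaF_add_one hl₀ hl₁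
  rw [artanh_eq_log_sub (by linarith) hs₁, hsq] at hart
  have hlog : log (1 + √(1 - 4 * l)) ≤ √(1 - 4 * l) := by
    linarith [log_le_sub_one_of_pos (x := 1 + √(1 - 4 * l)) (by linarith)]
  calc 4 * l = exp (log (4 * l)) := (exp_log (by linarith)).symm
    _ ≤ exp (-(2 * √(1 - 4 * l)) * thetaF l) := exp_le_exp.mpr (by linarith)

lemma thetaF_le (hl₀ : 0 < l) (hl₁ : l < 1 / 4) :
    thetaF l ≤ √(1 - 4 * l) / (1 - √(1 - 4 * l)) := by
  obtain ⟨hs₀, hs₁⟩ := sqrt_one_sub_four_mul_mem hl₀ hl₁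
  have h := (sqrt_mul_thetaF_add_one hl₀ hl₁).trans_le (artanh_le_div_one_sub hs₀.le hs₁)
  have hpos : 0 < 1 - √(1 - 4 * l) := by linarith
  rw [le_div_iff₀ hpos]
  rw [le_div_iff₀ hpos] at h
  nlinarith

end thetaF

theorem stmt18 (lam : ℝ → ℝ)
    (hmem : ∀ θ > (0:ℝ), lam θ ∈ Set.Ioo (0:ℝ) (1/4))
    (hinv : ∀ θ > (0:ℝ), thetaF (lam θ) = θ) :
    ∀ a < (2:ℝ), ∃ C > (0:ℝ), ∀ θ ≥ (1:ℝ), lam θ ≤ C * Real.exp (-a*θ) := by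
  intro a ha
  refine ⟨exp (a ^ 2 / (2 - a)) / 4, by positivity, fun θ hθ => ?_⟩
  obtain ⟨hl₀, hl₁⟩ := hmem θ (by linarith)
  have hθ := hinv θ (by linarith)
  obtain ⟨hs₀, hs₁⟩ := sqrt_one_sub_four_mul_mem hl₀ hl₁
  set s := √(1 - 4 * lam θ)
  have hexp : -(2 * s) * θ ≤ a ^ 2 / (2 - a) + -a * θ := by
    have hM : 0 ≤ a ^ 2 / (2 - a) := div_nonneg (sq_nonneg a) (by linarith)
    rcases le_or_gt a (2 * s) with has | has
    · nlinarith
    · have hθM : θ ≤ a / (2 - a) := by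
        calc θ ≤ s / (1 - s) := hθ ▸ thetaF_le hl₀ hl₁
          _ ≤ a / (2 - a) := by
            rw [div_le_div_iff₀ (by linarith) (by linarith)]; nlinarith
      have haθ : a * θ ≤ a ^ 2 / (2 - a) := by
        calc a * θ ≤ a * (a / (2 - a)) := by gcongr; linarith
          _ = a ^ 2 / (2 - a) := by ring
      nlinarith
  calc lam θ ≤ exp (-(2 * s) * θ) / 4 := by
        have := four_mul_le_exp_thetaF hl₀ hl₁; rw [hθ] at this; linarith
    _ ≤ exp (a ^ 2 / (2 - a) + -a * θ) / 4 := by gcongr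
    _ = exp (a ^ 2 / (2 - a)) / 4 * exp (-a * θ) := by rw [exp_add]; ring
end
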